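/- Let A be the Weyl algebra with generators a(n), a*(n), n ∈ ℤ, and relations [a(n), a*(m)] = δ_{n+m,0}, [a(n),a(m)] = [a*(n),a*(m)] = 0. For λ, μ ∈ ℂ there exists a module M₁(λ,μ) generated by a vector v₁ satisfying a(0)v₁ = λv₁, a(n)v₁ = 0 for n ≥ 1, a*(1)v₁ = μv₁, a*(m)v₁ = 0 for m ≥ 2, and M₁(λ,μ) has a PBW-type basis {a(−λ₁)⋯a(−λ_r)a*(−μ₁+1)⋯a*(−μ_s+1)v₁} indexed by pairs of partitions (λ₁ ≥ … ≥ λ_r ≥ 1, μ₁ ≥ … ≥ μ_s ≥ 1). -/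

import Mathlib

/-- A partition with positive parts, written as a decreasing list `λ₁ ≥ λ₂ ≥ … ≥ λ_r ≥ 1`. -/
def PartitionList : Type := {l : List ℕ // l.Pairwise (· ≥ ·) ∧ ∀ x ∈ l, 1 ≤ x}

open MvPolynomial

namespace S12

abbrev P : Type := MvPolynomial (ℕ ⊕ ℕ) ℂ

noncomputable def mX (i : ℕ ⊕ ℕ) : Module.End ℂ P := LinearMap.mulLeft ℂ (X i)
noncomputable def pd (i : ℕ ⊕ ℕ) : Module.End ℂ P := (pderiv i).toLinearMap

lemma mX_apply (i) (p : P) : mX i p = X i * p := rfl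
lemma pd_apply (i) (p : P) : pd i p = pderiv i p := rfl

lemma mX_mX (i j) : mX i * mX j = mX j * mX i := by
  refine LinearMap.ext fun p => ?_
  simp only [Module.End.mul_apply, mX_apply]
  ring

lemma pderiv_pderiv (i j) (p : P) : pderiv i (pderiv j p) = pderiv j (pderiv i p) := by
  induction p using MvPolynomial.induction_on with
  | C a => simp [pderiv_C]
  | add p q hp hq => simp [hp, hq]
  | mul_X p k hp =>
    simp only [pderiv_mul, map_add, hp, pderiv_X]
    by_cases hik : i = k <;> by_cases hjk : j = k <;>
      simp [hik, hjk, Pi.single_apply]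

lemma pderiv_X_mul (i j) (p : P) :
    pderiv i (X j * p) = X j * pderiv i p + (if i = j then p else 0) := by
  rw [pderiv_mul, pderiv_X]
  by_cases h : i = j <;> simp [h, Pi.single_apply, add_comm]

noncomputable def Aop (lam : ℂ) (n : ℤ) : Module.End ℂ P :=
  if n < 0 then mX (Sum.inl (-n - 1).toNat)
  else pd (Sum.inr n.toNat) + (if n = 0 then lam else 0) • (1 : Module.End ℂ P)

noncomputable def A'op (mu : ℂ) (m : ℤ) : Module.End ℂ P :=
  if 0 < m then (if m = 1 then mu else 0) • (1 : Module.End ℂ P) - pd (Sum.inl (m - 1).toNat)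
  else mX (Sum.inr (-m).toNat)

lemma ccr (lam mu : ℂ) (n m : ℤ) :
    Aop lam n * A'op mu m - A'op mu m * Aop lam n
      = if n + m = 0 then (1 : Module.End ℂ P) else 0 := by
  by_cases hn : n < 0 <;> by_cases hm : 0 < m
  · -- A = mX (inl a), A' = c•1 - pd (inl b)
    rw [Aop, A'op, if_pos hn, if_pos hm]
    refine LinearMap.ext fun p => ?_
    simp only [LinearMap.sub_apply, Module.End.mul_apply, LinearMap.smul_apply,
      Module.End.one_apply, mX_apply, pd_apply, map_sub, map_smul,
      pderiv_X_mul (Sum.inl (m - 1).toNat) (Sum.inl (-n - 1).toNat)]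
    by_cases hnm : n + m = 0
    · have hi : (if (Sum.inl (m - 1).toNat : ℕ ⊕ ℕ) = Sum.inl (-n - 1).toNat
          then p else 0) = p :=
        if_pos (by rw [show (m - 1).toNat = (-n - 1).toNat from by omega])
      rw [hi, if_pos hnm, Module.End.one_apply]
      module
    · have hi : (if (Sum.inl (m - 1).toNat : ℕ ⊕ ℕ) = Sum.inl (-n - 1).toNat
          then p else 0) = 0 :=
        if_neg (by simp only [Sum.inl.injEq]; omega)
      rw [hi, if_neg hnm, LinearMap.zero_apply]
      module
  · have hnm : n + m ≠ 0 := by omega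
    rw [Aop, A'op, if_pos hn, if_neg hm, if_neg hnm, mX_mX, sub_self]
  · have hnm : n + m ≠ 0 := by omega
    rw [Aop, A'op, if_neg hn, if_pos hm, if_neg hnm]
    refine LinearMap.ext fun p => ?_
    simp only [LinearMap.sub_apply, Module.End.mul_apply, LinearMap.add_apply,
      LinearMap.smul_apply, Module.End.one_apply, LinearMap.zero_apply, pd_apply,
      map_sub, map_smul, map_add, pderiv_pderiv (Sum.inr n.toNat)]
    module
  · rw [Aop, A'op, if_neg hn, if_neg hm]
    refine LinearMap.ext fun p => ?_
    simp only [LinearMap.sub_apply, Module.End.mul_apply, LinearMap.add_apply,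
      LinearMap.smul_apply, Module.End.one_apply, mX_apply, pd_apply, map_smul,
      pderiv_X_mul (Sum.inr n.toNat) (Sum.inr (-m).toNat), mul_smul_comm, smul_mul_assoc, mul_add]
    by_cases hnm : n + m = 0
    · have hi : (if (Sum.inr n.toNat : ℕ ⊕ ℕ) = Sum.inr (-m).toNat then p else 0) = p :=
        if_pos (by rw [show n.toNat = (-m).toNat from by omega])
      rw [hi, if_pos hnm, Module.End.one_apply]
      module
    · have hi : (if (Sum.inr n.toNat : ℕ ⊕ ℕ) = Sum.inr (-m).toNat then p else 0) = 0 :=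
        if_neg (by simp only [Sum.inr.injEq]; omega)
      rw [hi, if_neg hnm, LinearMap.zero_apply]
      module

end S12

namespace S12

lemma mX_list_prod_apply (l : List (ℕ ⊕ ℕ)) (p : P) :
    ((l.map mX).prod) p = (l.map X).prod * p := by
  induction l with
  | nil => simp
  | cons a t ih =>
    simp only [List.map_cons, List.prod_cons, Module.End.mul_apply, ih, mX_apply, mul_assoc]

lemma X_list_prod (l : List (ℕ ⊕ ℕ)) :
    ((l.map X).prod : P) = monomial (Multiset.toFinsupp (l : Multiset (ℕ ⊕ ℕ))) (1 : ℂ) := by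
  induction l with
  | nil =>
    simp only [List.map_nil, List.prod_nil, Multiset.coe_nil, map_zero]
    rw [monomial_zero', C_1]
  | cons a t ih =>
    rw [List.map_cons, List.prod_cons, ih,
      show ((a :: t : List (ℕ ⊕ ℕ)) : Multiset (ℕ ⊕ ℕ)) = a ::ₘ (t : Multiset _) from rfl,
      ← Multiset.singleton_add, Multiset.toFinsupp_add, Multiset.toFinsupp_singleton,
      show (X a : P) = monomial (Finsupp.single a 1) 1 from rfl, monomial_mul, one_mul]

lemma map_sub_add_one {l : List ℕ} (hl : ∀ x ∈ l, 1 ≤ x) :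
    (l.map (· - 1)).map (· + 1) = l := by
  rw [List.map_map]
  have : ∀ x ∈ l, (x - 1) + 1 = x := fun x hx => by have := hl x hx; omega
  calc l.map ((· + 1) ∘ (· - 1)) = l.map id := List.map_congr_left this
    _ = l := List.map_id l

noncomputable def Efn (st : PartitionList × PartitionList) : (ℕ ⊕ ℕ) →₀ ℕ :=
  Multiset.toFinsupp
    ((((st.1.1.map (· - 1)).map Sum.inl : List (ℕ ⊕ ℕ)) : Multiset (ℕ ⊕ ℕ)) +
     (((st.2.1.map (· - 1)).map Sum.inr : List (ℕ ⊕ ℕ)) : Multiset (ℕ ⊕ ℕ)))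

lemma decoe {α : Type} (l : List ℕ) (f : ℤ → α) :
    (l.map fun k => f (k : ℤ)) = l.map (fun k : ℕ => f k) := by
  induction l with
  | nil => rfl
  | cons a t ih => simpa using ih

lemma mapA_eq (lam : ℂ) (l : List ℕ) (hl : ∀ x ∈ l, 1 ≤ x) :
    (l.map fun k => Aop lam (-(k : ℤ))) = ((l.map (· - 1)).map Sum.inl).map mX := by
  rw [decoe l (fun z => Aop lam (-z))]
  have h2 : ((l.map (· - 1)).map Sum.inl).map mX = l.map (fun k => mX (Sum.inl (k - 1))) := by
    simp [List.map_map, Function.comp]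
  rw [h2]
  refine List.map_congr_left fun k hk => ?_
  have hk1 := hl k hk
  show Aop lam (-(k : ℤ)) = mX (Sum.inl (k - 1))
  rw [Aop, if_pos (by omega), show ((-(-(k : ℤ)) - 1).toNat) = k - 1 from by omega]

lemma mapA'_eq (mu : ℂ) (l : List ℕ) (hl : ∀ x ∈ l, 1 ≤ x) :
    (l.map fun k => A'op mu (1 - (k : ℤ))) = ((l.map (· - 1)).map Sum.inr).map mX := by
  rw [decoe l (fun z => A'op mu (1 - z))]
  have h2 : ((l.map (· - 1)).map Sum.inr).map mX = l.map (fun k => mX (Sum.inr (k - 1))) := by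
    simp [List.map_map, Function.comp]
  rw [h2]
  refine List.map_congr_left fun k hk => ?_
  have hk1 := hl k hk
  show A'op mu (1 - (k : ℤ)) = mX (Sum.inr (k - 1))
  rw [A'op, if_neg (by omega), show ((-(1 - (k : ℤ))).toNat) = k - 1 from by omega]

lemma family_eq (lam mu : ℂ) (st : PartitionList × PartitionList) :
    (((st.1.1.map fun k => Aop lam (-(k : ℤ))).prod *
      (st.2.1.map fun k => A'op mu (1 - (k : ℤ))).prod) (1 : P)) = monomial (Efn st) 1 := by
  rw [Module.End.mul_apply, mapA_eq lam _ st.1.2.2, mapA'_eq mu _ st.2.2.2,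
    mX_list_prod_apply _ (1 : P), mul_one, mX_list_prod_apply, X_list_prod, X_list_prod,
    monomial_mul, one_mul, Efn, Multiset.toFinsupp_add]

lemma count_inl_map_inr (x : ℕ) (M : Multiset ℕ) :
    Multiset.count (Sum.inl x : ℕ ⊕ ℕ) (M.map Sum.inr) = 0 :=
  Multiset.count_eq_zero_of_notMem (by simp)

lemma count_inr_map_inl (x : ℕ) (M : Multiset ℕ) :
    Multiset.count (Sum.inr x : ℕ ⊕ ℕ) (M.map Sum.inl) = 0 :=
  Multiset.count_eq_zero_of_notMem (by simp)

lemma Efn_injective : Function.Injective Efn := by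
  rintro ⟨⟨l1, s1, h1⟩, ⟨l2, s2, h2⟩⟩ ⟨⟨l1', s1', h1'⟩, ⟨l2', s2', h2'⟩⟩ h
  have hM := Multiset.toFinsupp.injective h
  simp only [Efn, ← Multiset.map_coe] at hM
  have k1 : Multiset.map (· - 1) (l1 : Multiset ℕ) = Multiset.map (· - 1) (l1' : Multiset ℕ) := by
    refine Multiset.ext.mpr fun x => ?_
    have hc := congrArg (Multiset.count (Sum.inl x)) hM
    simpa only [Multiset.count_add, count_inl_map_inr, add_zero,
      Multiset.count_map_eq_count' Sum.inl _ Sum.inl_injective] using hc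
  have k2 : Multiset.map (· - 1) (l2 : Multiset ℕ) = Multiset.map (· - 1) (l2' : Multiset ℕ) := by
    refine Multiset.ext.mpr fun x => ?_
    have hc := congrArg (Multiset.count (Sum.inr x)) hM
    simpa only [Multiset.count_add, count_inr_map_inl, zero_add,
      Multiset.count_map_eq_count' Sum.inr _ Sum.inr_injective] using hc
  rw [Multiset.map_coe, Multiset.map_coe, Multiset.coe_eq_coe] at k1 k2
  have p1 : List.Perm l1 l1' := by
    have := k1.map (· + 1)
    rwa [map_sub_add_one h1, map_sub_add_one h1'] at this
  have p2 : List.Perm l2 l2' := by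
    have := k2.map (· + 1)
    rwa [map_sub_add_one h2, map_sub_add_one h2'] at this
  have e1 : l1 = l1' := List.Perm.eq_of_pairwise' s1 s1' p1
  have e2 : l2 = l2' := List.Perm.eq_of_pairwise' s2 s2' p2
  subst e1; subst e2; rfl

noncomputable def sortedOf (g : ℕ →₀ ℕ) : List ℕ := Multiset.sort ((Finsupp.toMultiset g).map (· + 1)) (· ≥ ·)

lemma sortedOf_sorted (g : ℕ →₀ ℕ) : (sortedOf g).Pairwise (· ≥ ·) := Multiset.pairwise_sort _ _

lemma sortedOf_pos (g : ℕ →₀ ℕ) : ∀ x ∈ sortedOf g, 1 ≤ x := by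
  intro x hx
  rw [sortedOf, Multiset.mem_sort, Multiset.mem_map] at hx
  obtain ⟨y, -, rfl⟩ := hx
  omega

lemma sortedOf_multiset (g : ℕ →₀ ℕ) :
    Multiset.map (· - 1) ((sortedOf g : List ℕ) : Multiset ℕ) = Finsupp.toMultiset g := by
  rw [sortedOf, Multiset.sort_eq, Multiset.map_map]
  calc Multiset.map ((· - 1) ∘ (· + 1)) (Finsupp.toMultiset g)
      = Multiset.map id (Finsupp.toMultiset g) :=
        Multiset.map_congr rfl fun x _ => by simp
    _ = _ := Multiset.map_id _

lemma Efn_surjective : Function.Surjective Efn := by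
  intro f
  set g1 : ℕ →₀ ℕ := f.comapDomain Sum.inl Sum.inl_injective.injOn with hg1
  set g2 : ℕ →₀ ℕ := f.comapDomain Sum.inr Sum.inr_injective.injOn with hg2
  refine ⟨(⟨sortedOf g1, sortedOf_sorted g1, sortedOf_pos g1⟩,
    ⟨sortedOf g2, sortedOf_sorted g2, sortedOf_pos g2⟩), ?_⟩
  ext a
  rw [Efn, Multiset.toFinsupp_apply]
  simp only [← Multiset.map_coe]
  cases a with
  | inl x =>
    rw [Multiset.count_add, sortedOf_multiset, sortedOf_multiset,
      Multiset.count_map_eq_count' Sum.inl _ Sum.inl_injective,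
      count_inl_map_inr, add_zero, Finsupp.count_toMultiset]
    simp [hg1]
  | inr x =>
    rw [Multiset.count_add, sortedOf_multiset, sortedOf_multiset,
      Multiset.count_map_eq_count' Sum.inr _ Sum.inr_injective,
      count_inr_map_inl, zero_add, Finsupp.count_toMultiset]
    simp [hg2]

end S12

namespace S12

lemma pd_smul_mX_comm (i j : ℕ ⊕ ℕ) (c : ℂ) (h : i ≠ j) :
    (pd i + c • (1 : Module.End ℂ P)) * mX j = mX j * (pd i + c • 1) := by
  refine LinearMap.ext fun p => ?_
  simp only [Module.End.mul_apply, LinearMap.add_apply, LinearMap.smul_apply, Module.End.one_apply,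
    mX_apply, pd_apply, map_add, map_smul, pderiv_X_mul i j, if_neg h, mul_add, mul_smul_comm,
    add_zero]

lemma smul_sub_pd_mX_comm (i j : ℕ ⊕ ℕ) (c : ℂ) (h : i ≠ j) :
    (c • (1 : Module.End ℂ P) - pd i) * mX j = mX j * (c • 1 - pd i) := by
  refine LinearMap.ext fun p => ?_
  simp only [Module.End.mul_apply, LinearMap.sub_apply, LinearMap.smul_apply, Module.End.one_apply,
    mX_apply, pd_apply, map_sub, map_smul, pderiv_X_mul i j, if_neg h, mul_sub, mul_smul_comm,
    add_zero]

lemma AA_comm (lam : ℂ) (n m : ℤ) : Aop lam n * Aop lam m = Aop lam m * Aop lam n := by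
  by_cases hn : n < 0 <;> by_cases hm : m < 0
  · rw [Aop, Aop, if_pos hn, if_pos hm, mX_mX]
  · rw [Aop, Aop, if_pos hn, if_neg hm,
      (pd_smul_mX_comm (Sum.inr m.toNat) (Sum.inl (-n - 1).toNat) _ (by simp)).symm]
  · rw [Aop, Aop, if_neg hn, if_pos hm,
      pd_smul_mX_comm (Sum.inr n.toNat) (Sum.inl (-m - 1).toNat) _ (by simp)]
  · rw [Aop, Aop, if_neg hn, if_neg hm]
    refine LinearMap.ext fun p => ?_
    simp only [Module.End.mul_apply, LinearMap.add_apply, LinearMap.smul_apply,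
      Module.End.one_apply, pd_apply, map_add, map_smul, pderiv_pderiv (Sum.inr n.toNat)]
    module

lemma A'A'_comm (mu : ℂ) (n m : ℤ) : A'op mu n * A'op mu m = A'op mu m * A'op mu n := by
  by_cases hn : 0 < n <;> by_cases hm : 0 < m
  · rw [A'op, A'op, if_pos hn, if_pos hm]
    refine LinearMap.ext fun p => ?_
    simp only [Module.End.mul_apply, LinearMap.sub_apply, LinearMap.smul_apply,
      Module.End.one_apply, pd_apply, map_sub, map_smul, pderiv_pderiv (Sum.inl (n - 1).toNat)]
    module
  · rw [A'op, A'op, if_pos hn, if_neg hm,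
      smul_sub_pd_mX_comm (Sum.inl (n - 1).toNat) (Sum.inr (-m).toNat) _ (by simp)]
  · rw [A'op, A'op, if_neg hn, if_pos hm,
      (smul_sub_pd_mX_comm (Sum.inl (m - 1).toNat) (Sum.inr (-n).toNat) _ (by simp)).symm]
  · rw [A'op, A'op, if_neg hn, if_neg hm, mX_mX]

lemma A0_one (lam : ℂ) : Aop lam 0 (1 : P) = lam • 1 := by
  rw [Aop, if_neg (by omega)]
  simp [pd_apply, pderiv_one]

lemma Apos_one (lam : ℂ) (n : ℤ) (hn : 1 ≤ n) : Aop lam n (1 : P) = 0 := by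
  rw [Aop, if_neg (by omega), if_neg (by omega)]
  simp [pd_apply, pderiv_one]

lemma A'1_one (mu : ℂ) : A'op mu 1 (1 : P) = mu • 1 := by
  rw [A'op, if_pos one_pos, if_pos rfl]
  simp only [LinearMap.sub_apply, LinearMap.smul_apply, Module.End.one_apply, pd_apply,
    pderiv_one, sub_zero]

lemma A'big_one (mu : ℂ) (m : ℤ) (hm : 2 ≤ m) : A'op mu m (1 : P) = 0 := by
  rw [A'op, if_pos (by omega), if_neg (by omega)]
  simp [pd_apply, pderiv_one]

end S12



/-- existence of the Whittaker module `M₁(λ,μ)` over the infinite Weyl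
algebra (generators `a(n) = A n`, `a*(n) = A' n`, `[a(n), a*(m)] = δ_{n+m,0}`), generated
by a vector `v₁` with `a(0)v₁ = λv₁`, `a(n)v₁ = 0` for `n ≥ 1`, `a*(1)v₁ = μv₁`,
`a*(m)v₁ = 0` for `m ≥ 2`, together with its PBW basis
`a(−λ₁)⋯a(−λ_r) a*(−μ₁+1)⋯a*(−μ_s+1) v₁` indexed by pairs of partitions. -/
theorem stmt12 (lam mu : ℂ) :
    ∃ (V : Type) (_ : AddCommGroup V) (_ : Module ℂ V)
      (A A' : ℤ → Module.End ℂ V) (v₁ : V),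
      (∀ n m : ℤ, A n * A' m - A' m * A n = if n + m = 0 then 1 else 0) ∧
      (∀ n m : ℤ, A n * A m = A m * A n) ∧
      (∀ n m : ℤ, A' n * A' m = A' m * A' n) ∧
      A 0 v₁ = lam • v₁ ∧ (∀ n : ℤ, 1 ≤ n → A n v₁ = 0) ∧
      A' 1 v₁ = mu • v₁ ∧ (∀ m : ℤ, 2 ≤ m → A' m v₁ = 0) ∧
      LinearIndependent ℂ (fun st : PartitionList × PartitionList =>
        (((st.1.1.map fun k => A (-(k : ℤ))).prod *
          (st.2.1.map fun k => A' (1 - (k : ℤ))).prod) v₁)) ∧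
      Submodule.span ℂ (Set.range (fun st : PartitionList × PartitionList =>
        (((st.1.1.map fun k => A (-(k : ℤ))).prod *
          (st.2.1.map fun k => A' (1 - (k : ℤ))).prod) v₁))) = ⊤ := by
  have hfam : (fun st : PartitionList × PartitionList =>
      (((st.1.1.map fun k => S12.Aop lam (-(k : ℤ))).prod *
        (st.2.1.map fun k => S12.A'op mu (1 - (k : ℤ))).prod) (1 : S12.P))) =
      fun st => (MvPolynomial.basisMonomials (ℕ ⊕ ℕ) ℂ) (S12.Efn st) := by
    funext st
    rw [S12.family_eq]
    exact (congrFun (MvPolynomial.coe_basisMonomials _ _) _).symm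
  refine ⟨S12.P, inferInstance, inferInstance, S12.Aop lam, S12.A'op mu, 1,
    S12.ccr lam mu, S12.AA_comm lam, S12.A'A'_comm mu, S12.A0_one lam,
    fun n hn => S12.Apos_one lam n hn, S12.A'1_one mu, fun m hm => S12.A'big_one mu m hm,
    ?_, ?_⟩
  · rw [hfam]
    exact (MvPolynomial.basisMonomials _ _).linearIndependent.comp _ S12.Efn_injective
  · rw [hfam, show (fun st : PartitionList × PartitionList =>
        (MvPolynomial.basisMonomials (ℕ ⊕ ℕ) ℂ) (S12.Efn st)) =
        ⇑(MvPolynomial.basisMonomials (ℕ ⊕ ℕ) ℂ) ∘ S12.Efn from rfl,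
      S12.Efn_surjective.range_comp]
    exact (MvPolynomial.basisMonomials _ _).span_eq
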